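/- Let d ≥ 2, let z_0, …, z_{d−1} be distinct nonzero complex numbers and set f_p = ∑_{j=0}^{d−1} z_j^p for p ∈ ℤ. Let m ∈ ℤ and let r, N be integers with 1 ≤ r < d and N > r. If f_{m+nN+k} = 0 for all k = 1, …, r and all n = 0, 1, …, d−r (an r × (d−r+1) flag in the zero set), then f_{m+nN+k} = 0 for all k = 1, …, r and all n = 0, 1, …, d−1 (the extended r × d flag is also in the zero set). -/

import Mathlib

theorem stmt8 (d : ℕ) (hd : 2 ≤ d) (z : Fin d → ℂ) (hinj : Function.Injective z)
    (hz : ∀ j, z j ≠ 0) (f : ℤ → ℂ) (hf : ∀ p : ℤ, f p = ∑ j : Fin d, z j ^ p)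
    (m : ℤ) (r : ℕ) (N : ℤ) (hr1 : 1 ≤ r) (hr2 : r < d) (hN : (r : ℤ) < N)
    (hflag : ∀ k n : ℕ, 1 ≤ k → k ≤ r → n ≤ d - r → f (m + (n : ℤ) * N + k) = 0) :
    ∀ k n : ℕ, 1 ≤ k → k ≤ r → n ≤ d - 1 → f (m + (n : ℤ) * N + k) = 0 := by
  classical
  set w : Fin d → ℂ := fun j => z j ^ N with hw_def
  have hw : ∀ j, w j ≠ 0 := fun j => zpow_ne_zero N (hz j)
  set s : ℕ := d - r + 1 with hs_def
  set c : Fin r → (Fin d → ℂ) := fun k j => z j ^ m * z j ^ ((k : ℕ) + 1) with hc_def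
  have key : ∀ (kk : Fin r) (n : ℕ),
      (∑ j, c kk j * w j ^ n) = f (m + (n : ℤ) * N + (((kk : ℕ) + 1 : ℕ) : ℤ)) := by
    intro kk n
    rw [hf]
    refine Finset.sum_congr rfl fun j _ => ?_
    have h1 : (z j) ^ (m + (n : ℤ) * N + (((kk : ℕ) + 1 : ℕ) : ℤ))
        = z j ^ m * ((z j ^ N) ^ (n : ℕ)) * z j ^ ((kk : ℕ) + 1) := by
      rw [zpow_add₀ (hz j), zpow_add₀ (hz j), mul_comm (n : ℤ) N, zpow_mul,
        zpow_natCast, zpow_natCast]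
    rw [h1]; ring
  have hflag' : ∀ (kk : Fin r) (n : ℕ), n ≤ d - r → (∑ j, c kk j * w j ^ n) = 0 := by
    intro kk n hn
    rw [key]
    exact hflag ((kk : ℕ) + 1) n (Nat.succ_le_succ (Nat.zero_le _))
      (Nat.succ_le_of_lt kk.isLt) hn
  -- linear independence of the c's
  have hc : LinearIndependent ℂ c := by
    rw [Fintype.linearIndependent_iff]
    intro a ha kk
    have hav : ∀ j, (∑ k : Fin r, a k * z j ^ ((k : ℕ) + 1)) = 0 := by
      intro j
      have h0 := congrFun ha j
      simp only [Finset.sum_apply, Pi.smul_apply, smul_eq_mul, Pi.zero_apply, hc_def] at h0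
      have h2 : ∑ k : Fin r, a k * (z j ^ m * z j ^ ((k : ℕ) + 1))
          = z j ^ m * ∑ k : Fin r, a k * z j ^ ((k : ℕ) + 1) := by
        rw [Finset.mul_sum]; exact Finset.sum_congr rfl fun k _ => by ring
      rw [h2] at h0
      exact (mul_eq_zero.mp h0).resolve_left (zpow_ne_zero m (hz j))
    set q : Polynomial ℂ := ∑ k : Fin r, Polynomial.C (a k) * Polynomial.X ^ ((k : ℕ) + 1)
      with hq
    have hq0 : q = 0 := by
      apply Polynomial.eq_zero_of_natDegree_lt_card_of_eval_eq_zero q hinj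
      · intro j
        rw [hq]
        simp only [Polynomial.eval_finset_sum, Polynomial.eval_mul, Polynomial.eval_C,
          Polynomial.eval_pow, Polynomial.eval_X]
        exact hav j
      · have hdeg : q.natDegree ≤ r := by
          rw [hq]
          apply Polynomial.natDegree_sum_le_of_forall_le
          intro k _
          refine le_trans (Polynomial.natDegree_C_mul_le _ _) ?_
          rw [Polynomial.natDegree_X_pow]; exact k.isLt
        simpa using lt_of_le_of_lt hdeg hr2
    have hcoeff : q.coeff ((kk : ℕ) + 1) = a kk := by
      rw [hq, Polynomial.finset_sum_coeff]
      rw [Finset.sum_eq_single kk]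
      · simp [Polynomial.coeff_C_mul, Polynomial.coeff_X_pow]
      · intro b _ hb
        simp only [Polynomial.coeff_C_mul, Polynomial.coeff_X_pow, mul_ite, mul_one, mul_zero,
          ite_eq_right_iff]
        intro h
        exact absurd (Fin.ext (Nat.succ_injective h)) (Ne.symm hb)
      · intro h; exact absurd (Finset.mem_univ kk) h
    rw [hq0] at hcoeff
    simpa using hcoeff.symm
  -- matrix B
  set B : Matrix (Fin s) (Fin d) ℂ := Matrix.of (fun n j => w j ^ (n : ℕ)) with hB
  have hker : ∀ kk : Fin r, c kk ∈ LinearMap.ker B.mulVecLin := by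
    intro kk
    rw [LinearMap.mem_ker]
    funext n
    simp only [Matrix.mulVecLin_apply, Matrix.mulVec, dotProduct, Pi.zero_apply, hB,
      Matrix.of_apply]
    rw [show (∑ j, w j ^ (n : ℕ) * c kk j) = ∑ j, c kk j * w j ^ (n : ℕ) from
      Finset.sum_congr rfl fun j _ => mul_comm _ _]
    exact hflag' kk n (by have := n.isLt; omega)
  have hrank : B.rank ≤ d - r := by
    have h1 := LinearMap.finrank_range_add_finrank_ker B.mulVecLin
    have h2 : r ≤ Module.finrank ℂ (LinearMap.ker B.mulVecLin) := by
      have hspan : Submodule.span ℂ (Set.range c) ≤ LinearMap.ker B.mulVecLin :=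
        Submodule.span_le.mpr (Set.range_subset_iff.mpr hker)
      have h3 := Submodule.finrank_mono hspan
      rwa [finrank_span_eq_card hc, Fintype.card_fin] at h3
    have h3 : Module.finrank ℂ (Fin d → ℂ) = d := by simp
    rw [h3] at h1
    show Module.finrank ℂ (LinearMap.range B.mulVecLin) ≤ d - r
    omega
  obtain ⟨μ, hμmem, hμ0⟩ : ∃ μ : Fin s → ℂ, μ ∈ LinearMap.ker B.transpose.mulVecLin ∧ μ ≠ 0 := by
    rw [← Submodule.ne_bot_iff]
    intro hbot
    have hinj2 : Function.Injective B.transpose.mulVecLin := LinearMap.ker_eq_bot.mp hbot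
    have h4 := LinearMap.finrank_range_of_inj hinj2
    have h5 : Module.finrank ℂ (Fin s → ℂ) = s := by simp
    have h6 : B.transpose.rank = s := by
      show Module.finrank ℂ (LinearMap.range B.transpose.mulVecLin) = s
      rw [h4, h5]
    have h7 := Matrix.rank_transpose B
    omega
  have hμ : ∀ j, (∑ t : Fin s, μ t * w j ^ (t : ℕ)) = 0 := by
    intro j
    have h0 := congrFun (LinearMap.mem_ker.mp hμmem) j
    simp only [Matrix.mulVecLin_apply, Matrix.mulVec, dotProduct,
      Matrix.transpose_apply, Pi.zero_apply, hB, Matrix.of_apply] at h0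
    rw [← h0]
    exact Finset.sum_congr rfl fun t _ => mul_comm _ _
  -- extract top index T
  have hμne : ∃ t, μ t ≠ 0 := by
    by_contra h; push_neg at h; exact hμ0 (funext h)
  set F : Finset (Fin s) := Finset.univ.filter (fun t => μ t ≠ 0) with hF
  have hFne : F.Nonempty := by obtain ⟨t, ht⟩ := hμne; exact ⟨t, by simp [hF, ht]⟩
  set T : Fin s := F.max' hFne with hT
  have hTne : μ T ≠ 0 := by
    have h0 := F.max'_mem hFne
    simp only [hF, Finset.mem_filter] at h0
    exact h0.2
  have hTmax : ∀ t : Fin s, T < t → μ t = 0 := by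
    intro t ht
    by_contra h
    exact absurd (F.le_max' t (by simp [hF, h])) (not_le.mpr ht)
  -- main vanishing
  have main : ∀ (kk : Fin r) (n : ℕ), (∑ j, c kk j * w j ^ n) = 0 := by
    intro kk
    have rec' : ∀ p : ℕ, (∑ t : Fin s, μ t * ∑ j, c kk j * w j ^ (p + (t : ℕ))) = 0 := by
      intro p
      have h0 : ∀ t : Fin s, μ t * (∑ j, c kk j * w j ^ (p + (t : ℕ)))
          = ∑ j, (c kk j * w j ^ p) * (μ t * w j ^ (t : ℕ)) := by
        intro t
        rw [Finset.mul_sum]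
        exact Finset.sum_congr rfl fun j _ => by rw [pow_add]; ring
      rw [Finset.sum_congr rfl (fun t _ => h0 t), Finset.sum_comm]
      refine Finset.sum_eq_zero fun j _ => ?_
      rw [← Finset.mul_sum, hμ j, mul_zero]
    intro n
    induction n using Nat.strong_induction_on with
    | _ n ih =>
      by_cases hn : n ≤ d - r
      · exact hflag' kk n hn
      · have hTs : (T : ℕ) < s := T.isLt
        have hTn : (T : ℕ) < n := by omega
        have hrec := rec' (n - (T : ℕ))
        rw [Finset.sum_eq_single T] at hrec
        · rw [show n - (T : ℕ) + (T : ℕ) = n from by omega] at hrec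
          exact (mul_eq_zero.mp hrec).resolve_left hTne
        · intro t _ htT
          rcases lt_or_gt_of_ne htT with hlt | hgt
          · have hlt' : (t : ℕ) < (T : ℕ) := hlt
            rw [ih (n - (T : ℕ) + (t : ℕ)) (by omega), mul_zero]
          · rw [hTmax t hgt, zero_mul]
        · intro h; exact absurd (Finset.mem_univ T) h
  intro k n hk1 hkr hn
  have hkk : k - 1 < r := by omega
  have hres := main ⟨k - 1, hkk⟩ n
  rw [key] at hres
  have h2 : (((⟨k - 1, hkk⟩ : Fin r) : ℕ) + 1 : ℕ) = k := by
    simp only [Fin.val_mk]; omega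
  rw [h2] at hres
  exact hres
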